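/- Let R be a Noetherian integral domain, M a finitely generated R-module, and m ∈ M a non-torsion element. Then the set of prime ideals 𝔭 of R such that the image of m in the localization M_𝔭 lies in 𝔭·M_𝔭 is contained in the support of R/I, where I is the image of the evaluation map Hom_R(M,R) → R, f ↦ f(m); in particular I ≠ 0. -/

import Mathlib

/-- Lemma 2.1.6 of the paper: for `R` a Noetherian domain, `M` a finitely generated
`R`-module and `m ∈ M` nontorsion, every prime `𝔭` with `m ∈ 𝔭 M_𝔭` contains the
ideal `I = { f m : f ∈ Hom_R(M, R) }`; in particular `I ≠ 0`. -/
theorem stmt_1 {R : Type*} [CommRing R] [IsDomain R] [IsNoetherianRing R]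
    {M : Type*} [AddCommGroup M] [Module R M] [Module.Finite R M]
    (m : M) (hm : ∀ r : R, r • m = 0 → r = 0)
    (I : Ideal R)
    (hI : I = LinearMap.range ((LinearMap.applyₗ : M →ₗ[R] (M →ₗ[R] R) →ₗ[R] R) m)) :
    (∀ (𝔭 : Ideal R) [𝔭.IsPrime],
      (LocalizedModule.mkLinearMap 𝔭.primeCompl M) m ∈
        (Ideal.map (algebraMap R (Localization.AtPrime 𝔭)) 𝔭) •
          (⊤ : Submodule (Localization.AtPrime 𝔭) (LocalizedModule 𝔭.primeCompl M)) →
      I ≤ 𝔭) ∧ I ≠ ⊥ := by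
  constructor
  · intro 𝔭 h𝔭 hmem x hx
    rw [hI] at hx
    obtain ⟨f, rfl⟩ := hx
    set Rp := Localization.AtPrime 𝔭
    let F : LocalizedModule 𝔭.primeCompl M →ₗ[Rp] Rp :=
      IsLocalizedModule.mapExtendScalars 𝔭.primeCompl
        (LocalizedModule.mkLinearMap 𝔭.primeCompl M)
        (Algebra.linearMap R Rp) Rp f
    have hFm : F ((LocalizedModule.mkLinearMap 𝔭.primeCompl M) m) = algebraMap R Rp (f m) := by
      have := LinearMap.congr_fun (IsLocalizedModule.map_comp 𝔭.primeCompl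
        (LocalizedModule.mkLinearMap 𝔭.primeCompl M) (Algebra.linearMap R Rp) f) m
      simpa [F] using this
    have h1 : F ((LocalizedModule.mkLinearMap 𝔭.primeCompl M) m) ∈
        (Ideal.map (algebraMap R Rp) 𝔭) • (⊤ : Submodule Rp Rp) := by
      have := Submodule.mem_map_of_mem (f := F) hmem
      rw [Submodule.map_smul''] at this
      exact Submodule.smul_mono le_rfl le_top this
    rw [hFm] at h1
    rw [Ideal.smul_eq_mul, Ideal.mul_top, Localization.AtPrime.map_eq_maximalIdeal] at h1
    exact (IsLocalization.AtPrime.to_map_mem_maximal_iff Rp 𝔭 (f m)).mp h1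
  · -- construct a functional not vanishing on m
    set S := nonZeroDivisors R
    set K := FractionRing R
    have hm' : (LocalizedModule.mkLinearMap S M) m ≠ 0 := by
      intro h
      rw [LocalizedModule.mkLinearMap_apply] at h
      have h0 : LocalizedModule.mk m (1 : S) = LocalizedModule.mk (0 : M) (1 : S) := by
        simpa using h
      obtain ⟨u, hu⟩ := LocalizedModule.mk_eq.mp h0
      simp only [one_smul, smul_zero] at hu
      exact nonZeroDivisors.coe_ne_zero u (hm u hu)
    obtain ⟨φ, hφ⟩ : ∃ φ : Module.Dual K (LocalizedModule S M),
        φ ((LocalizedModule.mkLinearMap S M) m) ≠ 0 := by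
      by_contra h
      push_neg at h
      exact hm' ((Module.forall_dual_apply_eq_zero_iff K _).mp h)
    let f₀ : M →ₗ[R] K := (φ.restrictScalars R).comp (LocalizedModule.mkLinearMap S M)
    obtain ⟨s, hs⟩ := Module.Finite.fg_top (R := R) (M := M)
    obtain ⟨b, hb⟩ := IsLocalization.exist_integer_multiples S s f₀
    let g : M →ₗ[R] K := (b : R) • f₀
    have hginteg : ∀ x : M, g x ∈ LinearMap.range (Algebra.linearMap R K) := by
      have hsub : (⊤ : Submodule R M) ≤
          Submodule.comap g (Submodule.restrictScalars R (LinearMap.range (Algebra.linearMap R K))) := by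
        rw [← hs, Submodule.span_le]
        intro x hx
        obtain ⟨y, hy⟩ := hb x hx
        exact ⟨y, by simpa [Algebra.linearMap_apply, g] using hy⟩
      intro x
      exact hsub (Submodule.mem_top) 
    have hinj : Function.Injective (Algebra.linearMap R K) :=
      IsFractionRing.injective R K
    let e : R ≃ₗ[R] LinearMap.range (Algebra.linearMap R K) :=
      LinearEquiv.ofInjective _ hinj
    let f : M →ₗ[R] R := e.symm.toLinearMap.comp (g.codRestrict _ hginteg)
    have hfm : f m ≠ 0 := by
      intro h
      have h2 : g.codRestrict _ hginteg m = 0 :=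
        (LinearEquiv.map_eq_zero_iff e.symm).mp h
      have h3 : g m = 0 := congrArg Subtype.val h2
      have hb0 : algebraMap R K (b : R) ≠ 0 := fun h =>
        nonZeroDivisors.coe_ne_zero b (hinj (by simpa [Algebra.linearMap_apply] using h))
      have : g m = algebraMap R K (b : R) * φ ((LocalizedModule.mkLinearMap S M) m) := by
        simp [g, f₀, Algebra.smul_def]
      rw [this] at h3
      exact hφ ((mul_eq_zero.mp h3).resolve_left hb0)
    intro hbot
    have : f m ∈ I := by
      rw [hI]
      exact ⟨f, rfl⟩
    rw [hbot] at this
    exact hfm (by simpa using this)
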